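/- Let R be a field, G a group, J a subgroup of G, and λ an R[J]-module. Then there is an R-linear isomorphism Hom_{R[G]}(ind_J^G λ, Coind_J^G λ) ≅ ∏_{JgJ ∈ J\G/J} Hom_{R[J ∩ gJg⁻¹]}(ᵍλ, λ|_{J ∩ gJg⁻¹}), the product being taken over a set of representatives g of the double cosets JgJ of J in G. -/

import Mathlib

set_option synthInstance.maxHeartbeats 1000000
set_option maxHeartbeats 1000000

open Function

variable {R : Type*} [Field R] {G : Type*} [Group G]
variable {V : Type*} [AddCommGroup V] [Module R V]


/-- The induced module `ind_J^G λ`, modelled as the space of functions `f : G → V`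
with `f (g * j) = σ j⁻¹ (f g)` supported on finitely many left cosets of `J`
(this is the usual model of `R[G] ⊗_{R[J]} V`, with `g ⊗ v` corresponding to the function
supported on `gJ` sending `g * j` to `σ j⁻¹ v`). -/
def indCarrier (J : Subgroup G) (σ : Representation R J V) : Submodule R (G → V) where
  carrier := {f | (∀ (g : G) (j : J), f (g * (j : G)) = σ j⁻¹ (f g)) ∧
      ((QuotientGroup.mk : G → G ⧸ J) '' Function.support f).Finite}
  add_mem' := by
    rintro f g ⟨hf1, hf2⟩ ⟨hg1, hg2⟩
    refine ⟨fun x j => by simp [hf1, hg1], ?_⟩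
    refine (hf2.union hg2).subset ?_
    rw [← Set.image_union]
    exact Set.image_mono (Function.support_add _ _)
  zero_mem' := ⟨fun g j => by simp, by simp⟩
  smul_mem' := by
    rintro c f ⟨hf1, hf2⟩
    refine ⟨fun g j => by simp [hf1], ?_⟩
    exact hf2.subset (Set.image_mono (Function.support_const_smul_subset c f))

/-- The representation of `G` on the induced module `ind_J^G λ`, by left translation:
`(x • f) (g) = f (x⁻¹ * g)`. -/
def indRep (J : Subgroup G) (σ : Representation R J V) :
    Representation R G (indCarrier J σ) where
  toFun x :=
    { toFun := fun f => ⟨fun g => (f : G → V) (x⁻¹ * g), by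
        refine ⟨fun g j => ?_, ?_⟩
        · show (f : G → V) (x⁻¹ * (g * (j : G))) = σ j⁻¹ ((f : G → V) (x⁻¹ * g))
          rw [← mul_assoc]
          exact f.2.1 _ j
        refine ((f.2.2).image (fun c : G ⧸ J => x • c)).subset ?_
        rintro c ⟨g, hg, rfl⟩
        refine ⟨QuotientGroup.mk (x⁻¹ * g), ⟨x⁻¹ * g, hg, rfl⟩, ?_⟩
        show x • (QuotientGroup.mk (x⁻¹ * g) : G ⧸ J) = QuotientGroup.mk g
        rw [MulAction.Quotient.smul_mk, smul_eq_mul, mul_inv_cancel_left]⟩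
      map_add' := fun f g => Subtype.ext (funext fun g' => rfl)
      map_smul' := fun c f => Subtype.ext (funext fun g' => rfl) }
  map_one' := by
    apply LinearMap.ext; intro f
    exact Subtype.ext (funext fun g => by simp)
  map_mul' := fun x y => by
    apply LinearMap.ext; intro f
    exact Subtype.ext (funext fun g => by simp [mul_assoc])


/-- The coinduced module `Coind_J^G λ = Hom_{R[J]}(R[G], λ)`, modelled as the space of all
functions `f : G → V` with `f (j * g) = σ j (f g)`. -/
def coindCarrier (J : Subgroup G) (σ : Representation R J V) : Submodule R (G → V) where
  carrier := {f | ∀ (j : J) (g : G), f ((j : G) * g) = σ j (f g)}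
  add_mem' := fun hf hg j x => by simp [hf j x, hg j x]
  zero_mem' := fun j x => by simp
  smul_mem' := fun c f hf j x => by simp [hf j x]

/-- The representation of `G` on `Coind_J^G λ`, by right translation:
`(x • f) (g) = f (g * x)`. -/
def coindRep (J : Subgroup G) (σ : Representation R J V) :
    Representation R G (coindCarrier J σ) where
  toFun x :=
    { toFun := fun f => ⟨fun g => (f : G → V) (g * x), fun j g => by
        show (f : G → V) ((j : G) * g * x) = σ j ((f : G → V) (g * x))
        rw [mul_assoc]
        exact f.2 j (g * x)⟩
      map_add' := fun f g => Subtype.ext (funext fun g' => rfl)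
      map_smul' := fun c f => Subtype.ext (funext fun g' => rfl) }
  map_one' := by
    apply LinearMap.ext; intro f
    exact Subtype.ext (funext fun g => by simp)
  map_mul' := fun x y => by
    apply LinearMap.ext; intro f
    exact Subtype.ext (funext fun g => by simp [mul_assoc])

/-- The space `Hom_{R[G]}(ind_J^G λ, Coind_J^G λ)` of `G`-equivariant linear maps. -/
def HomIndCoind (J : Subgroup G) (σ : Representation R J V) :
    Submodule R ((indCarrier J σ) →ₗ[R] (coindCarrier J σ)) where
  carrier := {Φ | ∀ (x : G) (f : indCarrier J σ),
    Φ (indRep J σ x f) = coindRep J σ x (Φ f)}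
  add_mem' := fun hΦ hΨ x f => by simp [hΦ x f, hΨ x f]
  zero_mem' := fun x f => by simp
  smul_mem' := fun c Φ hΦ x f => by simp [hΦ x f]

/-- The intertwining space `Hom_{R[J ∩ gJg⁻¹]}(ᵍλ, λ|_{J ∩ gJg⁻¹})`, where `x ∈ J ∩ gJg⁻¹`
acts on `ᵍλ` (same underlying space as `λ`) by `σ (g⁻¹ x g)`. -/
def Intertwiner (J : Subgroup G) (σ : Representation R J V) (g : G) :
    Submodule R (V →ₗ[R] V) where
  carrier := {f | ∀ (x : G) (hx : x ∈ J) (hx' : g⁻¹ * x * g ∈ J) (v : V),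
    f (σ ⟨g⁻¹ * x * g, hx'⟩ v) = σ ⟨x, hx⟩ (f v)}
  add_mem' := fun hf hf' x hx hx' v => by simp [hf x hx hx' v, hf' x hx hx' v]
  zero_mem' := fun x hx hx' v => by simp
  smul_mem' := fun c f hf x hx hx' v => by simp [hf x hx hx' v]


section Stmt4Aux

open DoubleCoset

variable (J : Subgroup G) (σ : Representation R J V)

open scoped Classical in
/-- The basic vector `e v` of the induced module, supported on `J`. -/
noncomputable def eFun (v : V) : G → V := fun g =>
  if h : g ∈ J then σ (⟨g, h⟩ : J)⁻¹ v else 0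

lemma eFun_mem (v : V) : eFun J σ v ∈ indCarrier J σ := by
  constructor
  · intro g j
    by_cases h : g ∈ J
    · have h2 : g * (j : G) ∈ J := J.mul_mem h j.2
      simp only [eFun, dif_pos h, dif_pos h2]
      have e1 : (⟨g * (j : G), h2⟩ : J)⁻¹ = j⁻¹ * (⟨g, h⟩ : J)⁻¹ := by
        ext; simp [mul_inv_rev]
      rw [e1, map_mul, Module.End.mul_apply]
    · have h2 : ¬ g * (j : G) ∈ J := fun hh => h (by
        have := J.mul_mem hh (J.inv_mem j.2); simpa using this)
      simp only [eFun, dif_neg h, dif_neg h2, map_zero]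
  · apply Set.Finite.subset (Set.finite_singleton (((1 : G) : G ⧸ J)))
    rintro _ ⟨g, hg, rfl⟩
    have hgJ : g ∈ J := by
      by_contra h
      exact hg (by simp [eFun, dif_neg h])
    simp only [Set.mem_singleton_iff]
    exact (QuotientGroup.eq).mpr (by simpa using J.inv_mem hgJ)

/-- `e` as a linear map. -/
noncomputable def eL : V →ₗ[R] indCarrier J σ where
  toFun v := ⟨eFun J σ v, eFun_mem J σ v⟩
  map_add' v w := Subtype.ext (funext fun g => by
    by_cases h : g ∈ J <;> simp [eFun, h])
  map_smul' c v := Subtype.ext (funext fun g => by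
    by_cases h : g ∈ J <;> simp [eFun, h])

/-- From a `G`-map `Φ`, the family of linear maps `v ↦ Φ(e v)(g)`. -/
noncomputable def toFam (Φ : HomIndCoind J σ) (g : G) : V →ₗ[R] V :=
  (LinearMap.proj g) ∘ₗ ((coindCarrier J σ).subtype ∘ₗ (Φ.1 ∘ₗ eL J σ))

lemma toFam_translate (Φ : HomIndCoind J σ) (g x : G) (v : V) :
    toFam J σ Φ (g * x) v = ((Φ.1 (indRep J σ x (eL J σ v)) : coindCarrier J σ) : G → V) g := by
  rw [Φ.2 x]
  rfl

lemma indRep_e (j : G) (hj : j ∈ J) (v : V) :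
    indRep J σ j (eL J σ v) = eL J σ (σ ⟨j, hj⟩ v) := by
  apply Subtype.ext; funext g
  show eFun J σ v (j⁻¹ * g) = eFun J σ (σ ⟨j, hj⟩ v) g
  by_cases h : g ∈ J
  · have h2 : j⁻¹ * g ∈ J := J.mul_mem (J.inv_mem hj) h
    simp only [eFun, dif_pos h, dif_pos h2]
    have e1 : (⟨j⁻¹ * g, h2⟩ : J)⁻¹ = (⟨g, h⟩ : J)⁻¹ * ⟨j, hj⟩ := by
      ext; simp [mul_inv_rev]
    rw [e1, map_mul, Module.End.mul_apply]
  · have h2 : ¬ j⁻¹ * g ∈ J := fun hh => h (by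
      have := J.mul_mem hj hh; simpa [mul_assoc] using this)
    simp only [eFun, dif_neg h, dif_neg h2]

lemma toFam_mul_right (Φ : HomIndCoind J σ) (g j : G) (hj : j ∈ J) (v : V) :
    toFam J σ Φ (g * j) v = toFam J σ Φ g (σ ⟨j, hj⟩ v) := by
  rw [toFam_translate, indRep_e J σ j hj]
  rfl

lemma toFam_mul_left (Φ : HomIndCoind J σ) (j : G) (hj : j ∈ J) (g : G) (v : V) :
    toFam J σ Φ (j * g) v = σ ⟨j, hj⟩ (toFam J σ Φ g v) :=
  (Φ.1 (eL J σ v)).2 ⟨j, hj⟩ g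

lemma toFam_mem (Φ : HomIndCoind J σ) (g : G) : toFam J σ Φ g ∈ Intertwiner J σ g := by
  intro x hx hx' v
  rw [← toFam_mul_right J σ Φ g (g⁻¹ * x * g) hx' v,
    show g * (g⁻¹ * x * g) = x * g by group]
  exact toFam_mul_left J σ Φ x hx g v

lemma intertwiner_eq (g : G) (ψ : V →ₗ[R] V) (hψ : ψ ∈ Intertwiner J σ g)
    {a b a' b' : G} (ha : a ∈ J) (hb : b ∈ J) (ha' : a' ∈ J) (hb' : b' ∈ J)
    (hE : a * g * b = a' * g * b') (v : V) :
    σ ⟨a, ha⟩ (ψ (σ ⟨b, hb⟩ v)) = σ ⟨a', ha'⟩ (ψ (σ ⟨b', hb'⟩ v)) := by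
  have hx : a'⁻¹ * a ∈ J := J.mul_mem (J.inv_mem ha') ha
  have h1 : a'⁻¹ * (a * g * b) * b⁻¹ = g * (b' * b⁻¹) := by rw [hE]; group
  have key : g⁻¹ * (a'⁻¹ * a) * g = b' * b⁻¹ := by
    apply mul_left_cancel (a := g)
    rw [← h1]; group
  have hgxg : g⁻¹ * (a'⁻¹ * a) * g ∈ J := by
    rw [key]; exact J.mul_mem hb' (J.inv_mem hb)
  have hint := hψ (a'⁻¹ * a) hx hgxg (σ ⟨b, hb⟩ v)
  have ha'' : (⟨a, ha⟩ : J) = ⟨a', ha'⟩ * ⟨a'⁻¹ * a, hx⟩ := by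
    ext; simp
  have hb'' : (⟨b', hb'⟩ : J) = ⟨g⁻¹ * (a'⁻¹ * a) * g, hgxg⟩ * ⟨b, hb⟩ := by
    ext
    show b' = g⁻¹ * (a'⁻¹ * a) * g * b
    rw [key]; group
  rw [ha'', hb'', map_mul, map_mul, Module.End.mul_apply, Module.End.mul_apply, hint]

lemma exists_decomp (h : G) :
    ∃ a b : G, a ∈ J ∧ b ∈ J ∧ h = a * (DoubleCoset.mk J J h).out * b := by
  obtain ⟨a, b, ha, hb, e⟩ := DoubleCoset.mk_out_eq_mul J J h
  exact ⟨a⁻¹, b⁻¹, J.inv_mem ha, J.inv_mem hb, by rw [e]; group⟩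

noncomputable def dA (h : G) : G := (exists_decomp J h).choose
noncomputable def dB (h : G) : G := (exists_decomp J h).choose_spec.choose

lemma dA_mem (h : G) : dA J h ∈ J := (exists_decomp J h).choose_spec.choose_spec.1
lemma dB_mem (h : G) : dB J h ∈ J := (exists_decomp J h).choose_spec.choose_spec.2.1
lemma d_eq (h : G) : h = dA J h * (DoubleCoset.mk J J h).out * dB J h :=
  (exists_decomp J h).choose_spec.choose_spec.2.2

/-- Extend a family of intertwiners (indexed by double cosets) to all of `G`. -/
noncomputable def phiFam (Ψ : ∀ q : DoubleCoset.Quotient (J : Set G) (J : Set G), Intertwiner J σ q.out)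
    (h : G) : V →ₗ[R] V :=
  (σ ⟨dA J h, dA_mem J h⟩) ∘ₗ ((Ψ (DoubleCoset.mk J J h) : V →ₗ[R] V) ∘ₗ (σ ⟨dB J h, dB_mem J h⟩))

lemma phiFam_eq (Ψ : ∀ q : DoubleCoset.Quotient (J : Set G) (J : Set G), Intertwiner J σ q.out)
    (h : G) (q : DoubleCoset.Quotient (J : Set G) (J : Set G)) (hq : DoubleCoset.mk J J h = q)
    {a b : G} (ha : a ∈ J) (hb : b ∈ J) (hab : h = a * q.out * b) (v : V) :
    phiFam J σ Ψ h v = σ ⟨a, ha⟩ ((Ψ q : V →ₗ[R] V) (σ ⟨b, hb⟩ v)) := by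
  subst hq
  have h1 : dA J h * (DoubleCoset.mk J J h).out * dB J h = a * (DoubleCoset.mk J J h).out * b :=
    (d_eq J h).symm.trans hab
  exact intertwiner_eq J σ _ _ (Ψ (DoubleCoset.mk J J h)).2 (dA_mem J h) (dB_mem J h) ha hb h1 v

lemma phiFam_out (Ψ : ∀ q : DoubleCoset.Quotient (J : Set G) (J : Set G), Intertwiner J σ q.out)
    (q : DoubleCoset.Quotient (J : Set G) (J : Set G)) (v : V) :
    phiFam J σ Ψ q.out v = (Ψ q : V →ₗ[R] V) v := by
  have h := phiFam_eq J σ Ψ q.out q (DoubleCoset.out_eq' J J q) J.one_mem J.one_mem (by group) v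
  rw [h, show (⟨(1 : G), J.one_mem⟩ : J) = 1 from rfl, map_one, Module.End.one_apply,
    Module.End.one_apply]

lemma phiFam_mul_left (Ψ : ∀ q : DoubleCoset.Quotient (J : Set G) (J : Set G), Intertwiner J σ q.out)
    {j : G} (hj : j ∈ J) (h : G) (v : V) :
    phiFam J σ Ψ (j * h) v = σ ⟨j, hj⟩ (phiFam J σ Ψ h v) := by
  have hmk : DoubleCoset.mk J J (j * h) = DoubleCoset.mk J J h := by
    symm; rw [DoubleCoset.eq]; exact ⟨j, hj, 1, J.one_mem, by group⟩
  rw [phiFam_eq J σ Ψ (j * h) (DoubleCoset.mk J J h) hmk (J.mul_mem hj (dA_mem J h)) (dB_mem J h)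
      (by nth_rewrite 1 [d_eq J h]; group) v,
    phiFam_eq J σ Ψ h (DoubleCoset.mk J J h) rfl (dA_mem J h) (dB_mem J h) (d_eq J h) v]
  have e1 : (⟨j * dA J h, J.mul_mem hj (dA_mem J h)⟩ : J) = ⟨j, hj⟩ * ⟨dA J h, dA_mem J h⟩ := rfl
  rw [e1, map_mul, Module.End.mul_apply]

lemma phiFam_mul_right (Ψ : ∀ q : DoubleCoset.Quotient (J : Set G) (J : Set G), Intertwiner J σ q.out)
    (h : G) {j : G} (hj : j ∈ J) (v : V) :
    phiFam J σ Ψ (h * j) v = phiFam J σ Ψ h (σ ⟨j, hj⟩ v) := by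
  have hmk : DoubleCoset.mk J J (h * j) = DoubleCoset.mk J J h := by
    symm; rw [DoubleCoset.eq]; exact ⟨1, J.one_mem, j, hj, by group⟩
  rw [phiFam_eq J σ Ψ (h * j) (DoubleCoset.mk J J h) hmk (dA_mem J h) (J.mul_mem (dB_mem J h) hj)
      (by nth_rewrite 1 [d_eq J h]; group) v,
    phiFam_eq J σ Ψ h (DoubleCoset.mk J J h) rfl (dA_mem J h) (dB_mem J h) (d_eq J h) (σ ⟨j, hj⟩ v)]
  have e1 : (⟨dB J h * j, J.mul_mem (dB_mem J h) hj⟩ : J) = ⟨dB J h, dB_mem J h⟩ * ⟨j, hj⟩ := rfl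
  rw [e1, map_mul, Module.End.mul_apply]

/-- The term of the sum defining the reconstructed `G`-map. -/
noncomputable def termF (Ψ : ∀ q : DoubleCoset.Quotient (J : Set G) (J : Set G), Intertwiner J σ q.out)
    (f : indCarrier J σ) (g y : G) : V :=
  phiFam J σ Ψ (g * y) ((f : G → V) y)

lemma termF_coset (Ψ : ∀ q : DoubleCoset.Quotient (J : Set G) (J : Set G), Intertwiner J σ q.out)
    (f : indCarrier J σ) (g : G) {y j : G} (hj : j ∈ J) :
    termF J σ Ψ f g (y * j) = termF J σ Ψ f g y := by
  unfold termF
  have h1 : (f : G → V) (y * j) = σ (⟨j, hj⟩ : J)⁻¹ ((f : G → V) y) := f.2.1 y ⟨j, hj⟩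
  have hcancel : ∀ w : V, σ ⟨j, hj⟩ (σ (⟨j, hj⟩ : J)⁻¹ w) = w := fun w => by
    rw [← Module.End.mul_apply, ← map_mul, mul_inv_cancel, map_one, Module.End.one_apply]
  rw [h1, ← mul_assoc, phiFam_mul_right J σ Ψ (g * y) hj, hcancel]

lemma termF_mk_eq (Ψ : ∀ q : DoubleCoset.Quotient (J : Set G) (J : Set G), Intertwiner J σ q.out)
    (f : indCarrier J σ) (g : G) {y y' : G} (h : ((y : G) : G ⧸ J) = ((y' : G) : G ⧸ J)) :
    termF J σ Ψ f g y = termF J σ Ψ f g y' := by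
  have hj : y⁻¹ * y' ∈ J := (QuotientGroup.eq).mp h
  have e1 : y' = y * (y⁻¹ * y') := by group
  rw [e1, termF_coset J σ Ψ f g hj]

lemma termF_finite (Ψ : ∀ q : DoubleCoset.Quotient (J : Set G) (J : Set G), Intertwiner J σ q.out)
    (f : indCarrier J σ) (g : G) :
    (Function.support fun c : G ⧸ J => termF J σ Ψ f g c.out).Finite := by
  apply f.2.2.subset
  intro c hc
  have hne : (f : G → V) c.out ≠ 0 := by
    intro h0
    exact hc (by simp [termF, h0])
  exact ⟨c.out, hne, c.out_eq'⟩

/-- The reconstructed `G`-map, as a bare function. -/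
noncomputable def PhiFun (Ψ : ∀ q : DoubleCoset.Quotient (J : Set G) (J : Set G), Intertwiner J σ q.out)
    (f : indCarrier J σ) : G → V :=
  fun g => ∑ᶠ c : G ⧸ J, termF J σ Ψ f g c.out

lemma PhiFun_mem (Ψ : ∀ q : DoubleCoset.Quotient (J : Set G) (J : Set G), Intertwiner J σ q.out)
    (f : indCarrier J σ) : PhiFun J σ Ψ f ∈ coindCarrier J σ := by
  intro j g
  unfold PhiFun
  have hmap := AddMonoidHom.map_finsum (σ j).toAddMonoidHom (termF_finite J σ Ψ f g)
  simp only [LinearMap.toAddMonoidHom_coe] at hmap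
  rw [hmap]
  apply finsum_congr
  intro c
  unfold termF
  rw [mul_assoc]
  exact phiFam_mul_left J σ Ψ j.2 (g * c.out) _

/-- The reconstructed `G`-map, as a linear map. -/
noncomputable def PhiL (Ψ : ∀ q : DoubleCoset.Quotient (J : Set G) (J : Set G), Intertwiner J σ q.out) :
    indCarrier J σ →ₗ[R] coindCarrier J σ where
  toFun f := ⟨PhiFun J σ Ψ f, PhiFun_mem J σ Ψ f⟩
  map_add' f f' := Subtype.ext (funext fun g => by
    show (∑ᶠ c : G ⧸ J, termF J σ Ψ (f + f') g c.out)
      = (∑ᶠ c : G ⧸ J, termF J σ Ψ f g c.out) + ∑ᶠ c : G ⧸ J, termF J σ Ψ f' g c.out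
    have h1 : ∀ c : G ⧸ J, termF J σ Ψ (f + f') g c.out
        = termF J σ Ψ f g c.out + termF J σ Ψ f' g c.out := fun c => by
      unfold termF
      rw [show ((f + f' : indCarrier J σ) : G → V) c.out
        = (f : G → V) c.out + (f' : G → V) c.out from rfl, map_add]
    rw [finsum_congr h1, finsum_add_distrib (termF_finite J σ Ψ f g) (termF_finite J σ Ψ f' g)])
  map_smul' r f := Subtype.ext (funext fun g => by
    show (∑ᶠ c : G ⧸ J, termF J σ Ψ (r • f) g c.out) = r • ∑ᶠ c : G ⧸ J, termF J σ Ψ f g c.out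
    have h1 : ∀ c : G ⧸ J, termF J σ Ψ (r • f) g c.out = r • termF J σ Ψ f g c.out := fun c => by
      unfold termF
      rw [show ((r • f : indCarrier J σ) : G → V) c.out = r • (f : G → V) c.out from rfl,
        map_smul]
    rw [finsum_congr h1, ← smul_finsum' r (termF_finite J σ Ψ f g)])

lemma PhiL_mem (Ψ : ∀ q : DoubleCoset.Quotient (J : Set G) (J : Set G), Intertwiner J σ q.out) :
    PhiL J σ Ψ ∈ HomIndCoind J σ := by
  intro x f
  apply Subtype.ext; funext g
  show (∑ᶠ c : G ⧸ J, termF J σ Ψ (indRep J σ x f) g c.out)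
    = ∑ᶠ c : G ⧸ J, termF J σ Ψ f (g * x) c.out
  have key : ∀ c : G ⧸ J, termF J σ Ψ (indRep J σ x f) g c.out
      = termF J σ Ψ f (g * x) ((x⁻¹ • c).out) := by
    intro c
    have h1 : termF J σ Ψ (indRep J σ x f) g c.out = termF J σ Ψ f (g * x) (x⁻¹ * c.out) := by
      unfold termF
      have h2 : ((indRep J σ x f : indCarrier J σ) : G → V) c.out = (f : G → V) (x⁻¹ * c.out) :=
        rfl
      rw [h2]
      congr 1
      group
    have h3 : ((x⁻¹ * c.out : G) : G ⧸ J) = x⁻¹ • c := by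
      nth_rewrite 2 [← QuotientGroup.out_eq' c]
      rw [MulAction.Quotient.smul_mk, smul_eq_mul]
    have h4 : (((x⁻¹ • c).out : G) : G ⧸ J) = x⁻¹ • c := QuotientGroup.out_eq' _
    rw [h1]
    exact termF_mk_eq J σ Ψ f (g * x) (h3.trans h4.symm)
  have hstep : (∑ᶠ c : G ⧸ J, termF J σ Ψ (indRep J σ x f) g c.out)
      = ∑ᶠ c : G ⧸ J, termF J σ Ψ f (g * x) ((x⁻¹ • c).out) := finsum_congr key
  rw [hstep]
  exact finsum_comp (g := fun c : G ⧸ J => termF J σ Ψ f (g * x) c.out)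
    (fun c : G ⧸ J => x⁻¹ • c) (MulAction.bijective (x⁻¹ : G))

lemma decomp_finite (f : indCarrier J σ) :
    (Function.support fun c : G ⧸ J =>
      indRep J σ c.out (eL J σ ((f : G → V) c.out))).Finite := by
  apply f.2.2.subset
  intro c hc
  have hne : (f : G → V) c.out ≠ 0 := by
    intro h0
    exact hc (show indRep J σ c.out (eL J σ ((f : G → V) c.out)) = 0 by
      rw [h0, map_zero, map_zero])
  exact ⟨c.out, hne, c.out_eq'⟩

lemma ind_decomp (f : indCarrier J σ) :
    (∑ᶠ c : G ⧸ J, indRep J σ c.out (eL J σ ((f : G → V) c.out))) = f := by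
  have hfin : (Function.support fun c : G ⧸ J =>
      indRep J σ c.out (eL J σ ((f : G → V) c.out))).Finite := decomp_finite J σ f
  apply Subtype.ext
  have hcoe := AddMonoidHom.map_finsum (indCarrier J σ).subtype.toAddMonoidHom hfin
  simp only [LinearMap.toAddMonoidHom_coe, Submodule.coe_subtype] at hcoe
  rw [hcoe]
  funext h
  have hfin2 : (Function.support fun c : G ⧸ J =>
      ((indRep J σ c.out (eL J σ ((f : G → V) c.out)) : indCarrier J σ) : G → V)).Finite := by
    apply hfin.subset
    intro c hc
    intro h0
    refine hc ?_
    show ((indRep J σ c.out (eL J σ ((f : G → V) c.out)) : indCarrier J σ) : G → V) = 0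
    have h0' : indRep J σ c.out (eL J σ ((f : G → V) c.out)) = 0 := h0
    rw [h0', Submodule.coe_zero]
  have hev := AddMonoidHom.map_finsum (Pi.evalAddMonoidHom (fun _ : G => V) h) hfin2
  simp only [Pi.evalAddMonoidHom_apply] at hev
  rw [hev]
  have hsingle : ∀ c : G ⧸ J, c ≠ ((h : G) : G ⧸ J) →
      ((indRep J σ c.out (eL J σ ((f : G → V) c.out)) : indCarrier J σ) : G → V) h = 0 := by
    intro c hc
    show eFun J σ ((f : G → V) c.out) (c.out⁻¹ * h) = 0
    have hnot : ¬ c.out⁻¹ * h ∈ J := by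
      intro hmem
      exact hc (by rw [← c.out_eq']; exact (QuotientGroup.eq).mpr hmem)
    simp [eFun, dif_neg hnot]
  rw [finsum_eq_single _ ((h : G) : G ⧸ J) hsingle]
  show eFun J σ ((f : G → V) ((h : G ⧸ J)).out) (((h : G ⧸ J)).out⁻¹ * h) = (f : G → V) h
  have hmem : ((h : G ⧸ J)).out⁻¹ * h ∈ J := by
    have := QuotientGroup.out_eq' ((h : G) : G ⧸ J)
    exact (QuotientGroup.eq).mp this
  rw [show eFun J σ ((f : G → V) ((h : G ⧸ J)).out) (((h : G ⧸ J)).out⁻¹ * h)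
    = σ (⟨((h : G ⧸ J)).out⁻¹ * h, hmem⟩ : J)⁻¹ ((f : G → V) ((h : G ⧸ J)).out) from
    dif_pos hmem]
  have := f.2.1 ((h : G ⧸ J)).out (⟨((h : G ⧸ J)).out⁻¹ * h, hmem⟩ : J)
  rw [show ((h : G ⧸ J)).out * (((h : G ⧸ J)).out⁻¹ * h) = h by group] at this
  exact this.symm

lemma phiFam_toFam (Φ : HomIndCoind J σ) (h : G) (v : V) :
    phiFam J σ (fun q => ⟨toFam J σ Φ q.out, toFam_mem J σ Φ q.out⟩) h v
      = toFam J σ Φ h v := by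
  show σ ⟨dA J h, dA_mem J h⟩ (toFam J σ Φ (DoubleCoset.mk J J h).out (σ ⟨dB J h, dB_mem J h⟩ v))
    = toFam J σ Φ h v
  rw [← toFam_mul_right J σ Φ (DoubleCoset.mk J J h).out (dB J h) (dB_mem J h) v,
    ← toFam_mul_left J σ Φ (dA J h) (dA_mem J h) _ v, ← mul_assoc, ← d_eq J h]

end Stmt4Aux

/-- Let `R` be a field, `G` a group, `J` a subgroup of `G` and `λ` an `R[J]`-module (given
as a representation `σ` of `J` on `V`).  There is an `R`-linear isomorphism
`Hom_{R[G]}(ind_J^G λ, Coind_J^G λ) ≅ ∏_{JgJ ∈ J\G/J} Hom_{R[J ∩ gJg⁻¹]}(ᵍλ, λ)`,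
the product being over the double cosets of `J` in `G` (with `Quot.out` as set of
representatives). -/
theorem stmt_4 (J : Subgroup G) (σ : Representation R J V) :
    Nonempty ((HomIndCoind J σ) ≃ₗ[R]
      ((q : DoubleCoset.Quotient (J : Set G) (J : Set G)) → Intertwiner J σ q.out)) := by
  refine ⟨{
      toFun := fun Φ q => ⟨toFam J σ Φ q.out, toFam_mem J σ Φ q.out⟩
      map_add' := fun Φ Φ' => funext fun q => Subtype.ext (LinearMap.ext fun v => rfl)
      map_smul' := fun r Φ => funext fun q => Subtype.ext (LinearMap.ext fun v => rfl)
      invFun := fun Ψ => ⟨PhiL J σ Ψ, PhiL_mem J σ Ψ⟩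
      left_inv := ?_
      right_inv := ?_ }⟩
  · intro Φ
    apply Subtype.ext
    apply LinearMap.ext; intro f
    apply Subtype.ext; funext g
    show (∑ᶠ c : G ⧸ J,
        termF J σ (fun q => ⟨toFam J σ Φ q.out, toFam_mem J σ Φ q.out⟩) f g c.out)
      = ((Φ.1 f : coindCarrier J σ) : G → V) g
    have h1 : ∀ c : G ⧸ J,
        termF J σ (fun q => ⟨toFam J σ Φ q.out, toFam_mem J σ Φ q.out⟩) f g c.out
        = (LinearMap.proj g ∘ₗ ((coindCarrier J σ).subtype ∘ₗ Φ.1))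
            (indRep J σ c.out (eL J σ ((f : G → V) c.out))) := by
      intro c
      show phiFam J σ (fun q => ⟨toFam J σ Φ q.out, toFam_mem J σ Φ q.out⟩)
        (g * c.out) ((f : G → V) c.out) = _
      rw [phiFam_toFam J σ Φ (g * c.out) ((f : G → V) c.out)]
      exact toFam_translate J σ Φ g c.out ((f : G → V) c.out)
    have hmap := AddMonoidHom.map_finsum
      (LinearMap.proj g ∘ₗ ((coindCarrier J σ).subtype ∘ₗ Φ.1)).toAddMonoidHom
      (decomp_finite J σ f)
    simp only [LinearMap.toAddMonoidHom_coe] at hmap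
    rw [finsum_congr h1, ← hmap, ind_decomp J σ f]
    rfl
  · intro Ψ
    funext q
    apply Subtype.ext
    apply LinearMap.ext; intro v
    show (∑ᶠ c : G ⧸ J, termF J σ Ψ (eL J σ v) q.out c.out) = (Ψ q : V →ₗ[R] V) v
    have hzero : ∀ c : G ⧸ J, c ≠ (((1 : G)) : G ⧸ J) →
        termF J σ Ψ (eL J σ v) q.out c.out = 0 := by
      intro c hc
      have hnot : ¬ c.out ∈ J := by
        intro hmem
        refine hc ?_
        rw [← QuotientGroup.out_eq' c]
        exact (QuotientGroup.eq).mpr (by simpa using J.inv_mem hmem)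
      show phiFam J σ Ψ (q.out * c.out) (eFun J σ v c.out) = 0
      rw [show eFun J σ v c.out = 0 from dif_neg hnot, map_zero]
    rw [finsum_eq_single _ (((1 : G)) : G ⧸ J) hzero]
    have hj0 : (((1 : G) : G ⧸ J)).out⁻¹ ∈ J := by
      have h2 := (QuotientGroup.eq).mp (QuotientGroup.out_eq' (((1 : G)) : G ⧸ J))
      simpa using h2
    have hone : (((1 : G) : G ⧸ J)).out ∈ J := by simpa using J.inv_mem hj0
    show phiFam J σ Ψ (q.out * (((1 : G) : G ⧸ J)).out) (eFun J σ v (((1 : G) : G ⧸ J)).out)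
      = (Ψ q : V →ₗ[R] V) v
    have hcancel : σ ⟨(((1 : G) : G ⧸ J)).out, hone⟩
        (σ (⟨(((1 : G) : G ⧸ J)).out, hone⟩ : J)⁻¹ v) = v := by
      rw [← Module.End.mul_apply, ← map_mul, mul_inv_cancel, map_one, Module.End.one_apply]
    rw [show eFun J σ v (((1 : G) : G ⧸ J)).out
        = σ (⟨(((1 : G) : G ⧸ J)).out, hone⟩ : J)⁻¹ v from dif_pos hone,
      phiFam_mul_right J σ Ψ q.out hone, hcancel, phiFam_out J σ Ψ q v]
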